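/- A strictly positive N×N matrix L has finite projective diameter: δ(L) = sup{ρ_H(Lx, Ly) : x, y ∈ int K_+^N} < ∞, with the explicit bound δ(L) ≤ 2 max_{i,j,k,l} ln( (L[i,k] L[j,l]) / (L[j,k] L[i,l]) ). -/

import Mathlib

/-- The Hilbert projective metric on vectors with strictly positive
components: `ρ_H(x,y) = max_i ln(y_i/x_i) + max_i ln(x_i/y_i)`. -/
noncomputable def rhoH {N : ℕ} [NeZero N] (x y : Fin N → ℝ) : ℝ :=
  Finset.univ.sup' Finset.univ_nonempty (fun i => Real.log (y i / x i)) +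
    Finset.univ.sup' Finset.univ_nonempty (fun i => Real.log (x i / y i))

/-- A strictly positive `N×N` matrix has finite projective
diameter, with the explicit bound
`δ(L) ≤ 2 max_{i,j,k,l} ln( L i k · L j l / (L j k · L i l) )`. -/
theorem positive_matrix_finite_projective_diameter
    (N : ℕ) [NeZero N] (L : Matrix (Fin N) (Fin N) ℝ)
    (hL : ∀ i j, 0 < L i j) :
    let S : Set ℝ := {d : ℝ | ∃ x y : Fin N → ℝ,
      (∀ i, 0 < x i) ∧ (∀ i, 0 < y i) ∧ d = rhoH (L.mulVec x) (L.mulVec y)}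
    BddAbove S ∧
    sSup S ≤ 2 * Finset.univ.sup' Finset.univ_nonempty
      (fun p : Fin N × Fin N × Fin N × Fin N =>
        Real.log (L p.1 p.2.2.1 * L p.2.1 p.2.2.2 /
          (L p.2.1 p.2.2.1 * L p.1 p.2.2.2))) := by
  intro S
  set M := Finset.univ.sup' Finset.univ_nonempty
      (fun p : Fin N × Fin N × Fin N × Fin N =>
        Real.log (L p.1 p.2.2.1 * L p.2.1 p.2.2.2 /
          (L p.2.1 p.2.2.1 * L p.1 p.2.2.2))) with hM
  have hMnonneg : 0 ≤ M := by
    have h0 := Finset.le_sup' (f := fun p : Fin N × Fin N × Fin N × Fin N =>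
        Real.log (L p.1 p.2.2.1 * L p.2.1 p.2.2.2 /
          (L p.2.1 p.2.2.1 * L p.1 p.2.2.2)))
      (Finset.mem_univ ((0 : Fin N), (0 : Fin N), (0 : Fin N), (0 : Fin N)))
    have hne : (L 0 0 * L 0 0) ≠ 0 := (mul_pos (hL 0 0) (hL 0 0)).ne'
    rw [hM]
    simp [div_self hne] at h0
    exact h0
  have hpos : ∀ (x : Fin N → ℝ), (∀ i, 0 < x i) → ∀ i, 0 < L.mulVec x i := by
    intro x hx i
    have h : L.mulVec x i = ∑ k, L i k * x k := rfl
    rw [h]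
    exact Finset.sum_pos (fun k _ => mul_pos (hL i k) (hx k)) Finset.univ_nonempty
  have key : ∀ (x : Fin N → ℝ), (∀ i, 0 < x i) → ∀ i j : Fin N,
      ∃ k, Real.log (L.mulVec x i) - Real.log (L.mulVec x j)
        ≤ Real.log (L i k) - Real.log (L j k) := by
    intro x hx i j
    obtain ⟨k, -, hk⟩ := Finset.exists_mem_eq_sup' (Finset.univ_nonempty)
      (fun m : Fin N => L i m / L j m)
    refine ⟨k, ?_⟩
    have hk' : ∀ m, L i m / L j m ≤ L i k / L j k := fun m => by
      rw [← hk]; exact Finset.le_sup' (fun m : Fin N => L i m / L j m) (Finset.mem_univ m)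
    have hle : L.mulVec x i ≤ (L i k / L j k) * L.mulVec x j := by
      have hterm : ∀ m, L i m * x m ≤ (L i k / L j k) * (L j m * x m) := by
        intro m
        have hjm : (L j m) ≠ 0 := (hL j m).ne'
        have h1 : L i m * x m = (L i m / L j m) * (L j m * x m) := by
          field_simp
        rw [h1]
        exact mul_le_mul_of_nonneg_right (hk' m) (mul_pos (hL j m) (hx m)).le
      calc L.mulVec x i = ∑ m, L i m * x m := rfl
        _ ≤ ∑ m, (L i k / L j k) * (L j m * x m) :=
            Finset.sum_le_sum (fun m _ => hterm m)
        _ = (L i k / L j k) * ∑ m, L j m * x m := by rw [Finset.mul_sum]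
        _ = (L i k / L j k) * L.mulVec x j := rfl
    have h2 : Real.log (L.mulVec x i) ≤ Real.log ((L i k / L j k) * L.mulVec x j) :=
      Real.log_le_log (hpos x hx i) hle
    rw [Real.log_mul (div_pos (hL i k) (hL j k)).ne' (ne_of_gt (hpos x hx j)),
      Real.log_div (ne_of_gt (hL i k)) (ne_of_gt (hL j k))] at h2
    linarith
  have main : ∀ x y : Fin N → ℝ, (∀ i, 0 < x i) → (∀ i, 0 < y i) →
      rhoH (L.mulVec x) (L.mulVec y) ≤ M := by
    intro x y hx hy
    obtain ⟨i, -, hi⟩ := Finset.exists_mem_eq_sup' Finset.univ_nonempty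
      (fun i => Real.log (L.mulVec y i / L.mulVec x i))
    obtain ⟨j, -, hj⟩ := Finset.exists_mem_eq_sup' Finset.univ_nonempty
      (fun i => Real.log (L.mulVec x i / L.mulVec y i))
    obtain ⟨k, hk⟩ := key y hy i j
    obtain ⟨l, hl⟩ := key x hx j i
    have hMle : Real.log (L i k) - Real.log (L j k)
        + (Real.log (L j l) - Real.log (L i l)) ≤ M := by
      have hle := Finset.le_sup' (f := fun p : Fin N × Fin N × Fin N × Fin N =>
          Real.log (L p.1 p.2.2.1 * L p.2.1 p.2.2.2 /
            (L p.2.1 p.2.2.1 * L p.1 p.2.2.2))) (Finset.mem_univ (i, j, k, l))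
      rw [hM]
      refine le_trans (le_of_eq ?_) hle
      rw [Real.log_div (mul_pos (hL i k) (hL j l)).ne' (mul_pos (hL j k) (hL i l)).ne',
        Real.log_mul (ne_of_gt (hL i k)) (ne_of_gt (hL j l)),
        Real.log_mul (ne_of_gt (hL j k)) (ne_of_gt (hL i l))]
      ring
    rw [rhoH, hi, hj,
      Real.log_div (ne_of_gt (hpos y hy i)) (ne_of_gt (hpos x hx i)),
      Real.log_div (ne_of_gt (hpos x hx j)) (ne_of_gt (hpos y hy j))]
    linarith
  have hub : ∀ d ∈ S, d ≤ 2 * M := by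
    rintro d ⟨x, y, hx, hy, rfl⟩
    have := main x y hx hy
    linarith
  exact ⟨⟨2 * M, hub⟩, Real.sSup_le hub (by linarith)⟩
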